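/- Moreau's identity: for a proper closed convex function f: ℝᵖ → ℝ ∪ {+∞} with conjugate f*, and any y ∈ ℝᵖ and c > 0, y = prox_{cf}(y) + c·prox_{(1/c)f*}(y/c), where prox_{cf}(y) = argmin_x { f(x) + (1/(2c))‖x - y‖₂² }. -/

import Mathlib

open scoped RealInnerProductSpace

set_option maxHeartbeats 1600000 in
/-- Moreau's identity: for a proper closed convex `f : ℝᵖ → ℝ ∪ {+∞}` with Fenchel
conjugate `f*`, any `y` and `c > 0` satisfy
`y = prox_{cf}(y) + c • prox_{(1/c) f*}(y/c)`, where the proximal points are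
characterized as the unique minimizers of the corresponding objectives. -/
theorem moreau_identity {p : ℕ}
    (f : EuclideanSpace ℝ (Fin p) → EReal)
    (hne_bot : ∀ x, f x ≠ ⊥) (hproper : ∃ x, f x ≠ ⊤)
    (hclosed : LowerSemicontinuous f)
    (hconvex : ∀ x z : EuclideanSpace ℝ (Fin p), ∀ a b : ℝ, 0 ≤ a → 0 ≤ b → a + b = 1 →
      f (a • x + b • z) ≤ (a : EReal) * f x + (b : EReal) * f z)
    (y : EuclideanSpace ℝ (Fin p)) (c : ℝ) (hc : 0 < c)
    (u v : EuclideanSpace ℝ (Fin p))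
    -- `u = prox_{cf}(y)`: the unique minimizer of `x ↦ f x + (1/(2c))‖x - y‖²`
    (hu : ∀ x, f u + ((1 / (2 * c) * ‖u - y‖ ^ 2 : ℝ) : EReal) ≤
      f x + ((1 / (2 * c) * ‖x - y‖ ^ 2 : ℝ) : EReal))
    (hu_uniq : ∀ w, (∀ x, f w + ((1 / (2 * c) * ‖w - y‖ ^ 2 : ℝ) : EReal) ≤
      f x + ((1 / (2 * c) * ‖x - y‖ ^ 2 : ℝ) : EReal)) → w = u)
    -- `v = prox_{(1/c) f*}(y/c)`: the unique minimizer of `x ↦ f*(x) + (c/2)‖x - y/c‖²`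
    (hv : ∀ x, (⨆ z, (((⟪z, v⟫ : ℝ)) : EReal) - f z) + ((c / 2 * ‖v - c⁻¹ • y‖ ^ 2 : ℝ) : EReal) ≤
      (⨆ z, (((⟪z, x⟫ : ℝ)) : EReal) - f z) + ((c / 2 * ‖x - c⁻¹ • y‖ ^ 2 : ℝ) : EReal))
    (hv_uniq : ∀ w, (∀ x, (⨆ z, (((⟪z, w⟫ : ℝ)) : EReal) - f z) + ((c / 2 * ‖w - c⁻¹ • y‖ ^ 2 : ℝ) : EReal) ≤
      (⨆ z, (((⟪z, x⟫ : ℝ)) : EReal) - f z) + ((c / 2 * ‖x - c⁻¹ • y‖ ^ 2 : ℝ) : EReal)) → w = v) :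
    y = u + c • v := by
  -- f u is a real number
  obtain ⟨x0, hx0⟩ := hproper
  have hfu_ne_top : f u ≠ ⊤ := by
    intro h
    have h1 := hu x0
    rw [h] at h1
    rw [EReal.top_add_of_ne_bot (EReal.coe_ne_bot _)] at h1
    have h2 : f x0 + ((1 / (2 * c) * ‖x0 - y‖ ^ 2 : ℝ) : EReal) < ⊤ :=
      EReal.add_lt_top hx0 (EReal.coe_ne_top _)
    exact absurd h1 (not_le.mpr (h2.trans_le le_top))
  obtain ⟨fu, hfu⟩ : ∃ r : ℝ, f u = (r : EReal) :=
    ⟨(f u).toReal, (EReal.coe_toReal hfu_ne_top (hne_bot u)).symm⟩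
  set w : EuclideanSpace ℝ (Fin p) := c⁻¹ • (y - u) with hw
  -- subgradient inequality: ∀ x, fu + ⟪w, x - u⟫ ≤ f x
  have hsub : ∀ x, ((fu + ⟪w, x - u⟫ : ℝ) : EReal) ≤ f x := by
    intro x
    by_cases hfx_top : f x = ⊤
    · rw [hfx_top]; exact le_top
    obtain ⟨fx, hfx⟩ : ∃ r : ℝ, f x = (r : EReal) :=
      ⟨(f x).toReal, (EReal.coe_toReal hfx_top (hne_bot x)).symm⟩
    · rw [hfx, EReal.coe_le_coe_iff]
      have hwinner : ⟪w, x - u⟫ = c⁻¹ * ⟪y - u, x - u⟫ := real_inner_smul_left _ _ _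
      rw [hwinner]
      have key : ∀ t : ℝ, 0 < t → t ≤ 1 →
          fu + c⁻¹ * ⟪y - u, x - u⟫ ≤ fx + t / (2 * c) * ‖x - u‖ ^ 2 := by
        intro t ht ht1
        set xt : EuclideanSpace ℝ (Fin p) := (1 - t) • u + t • x with hxt
        have h1 := hu xt
        have h2 := hconvex u x (1 - t) t (by linarith) ht.le (by ring)
        rw [← hxt, hfu, hfx] at h2
        have h2' : f xt ≤ (((1 - t) * fu + t * fx : ℝ) : EReal) := by
          rw [EReal.coe_add, EReal.coe_mul, EReal.coe_mul]
          exact h2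
        rw [hfu] at h1
        have h3 : ((fu + 1 / (2 * c) * ‖u - y‖ ^ 2 : ℝ) : EReal) ≤
            (((1 - t) * fu + t * fx + 1 / (2 * c) * ‖xt - y‖ ^ 2 : ℝ) : EReal) := by
          rw [EReal.coe_add, EReal.coe_add]
          calc (fu : EReal) + ((1 / (2 * c) * ‖u - y‖ ^ 2 : ℝ) : EReal)
              ≤ f xt + ((1 / (2 * c) * ‖xt - y‖ ^ 2 : ℝ) : EReal) := h1
            _ ≤ (((1 - t) * fu + t * fx : ℝ) : EReal) + ((1 / (2 * c) * ‖xt - y‖ ^ 2 : ℝ) : EReal) :=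
                add_le_add_left h2' _
        rw [EReal.coe_le_coe_iff] at h3
        have hxt_eq : xt - y = (u - y) + t • (x - u) := by
          rw [hxt]; module
        have hnorm : ‖xt - y‖ ^ 2 = ‖u - y‖ ^ 2 + 2 * (t * ⟪u - y, x - u⟫) + t ^ 2 * ‖x - u‖ ^ 2 := by
          rw [hxt_eq, norm_add_sq_real, real_inner_smul_right, norm_smul, Real.norm_eq_abs,
            mul_pow, sq_abs]
        rw [hnorm] at h3
        have hinner_neg : ⟪y - u, x - u⟫ = -⟪u - y, x - u⟫ := by
          rw [← inner_neg_left]; congr 1; abel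
        rw [hinner_neg]
        have hc' : (0:ℝ) < 2 * c := by linarith
        have hdiv : c⁻¹ = (2 : ℝ) * (1 / (2 * c)) := by
          field_simp
        -- from h3: fu + 1/(2c)‖u-y‖² ≤ (1-t)fu + t fx + 1/(2c)(‖u-y‖² + 2t⟪u-y,x-u⟫ + t²‖x-u‖²)
        -- hence t fu ≤ t fx + (t/c)⟪u-y,x-u⟫ + t²/(2c)‖x-u‖², divide by t
        rw [hdiv]
        have h4 : fu ≤ fx + 2 * (1 / (2 * c)) * ⟪u - y, x - u⟫ + t * (1 / (2 * c)) * ‖x - u‖ ^ 2 := by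
          have hpos : (0:ℝ) < 1 / (2 * c) := by positivity
          nlinarith [h3, mul_pos ht hpos]
        have ht2c : t / (2 * c) = t * (1 / (2 * c)) := by ring
        rw [ht2c]
        nlinarith [h4]
      -- take t → 0
      apply le_of_forall_pos_le_add
      intro ε hε
      have hK : (0:ℝ) ≤ ‖x - u‖ ^ 2 := by positivity
      set t : ℝ := min 1 (2 * c * ε / (‖x - u‖ ^ 2 + 1)) with htdef
      have htpos : 0 < t := by
        apply lt_min one_pos
        positivity
      have ht1 : t ≤ 1 := min_le_left _ _
      have h5 := key t htpos ht1
      have h6 : t / (2 * c) * ‖x - u‖ ^ 2 ≤ ε := by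
        have ht2 : t ≤ 2 * c * ε / (‖x - u‖ ^ 2 + 1) := min_le_right _ _
        have hd : (0:ℝ) < ‖x - u‖ ^ 2 + 1 := by positivity
        rw [div_mul_eq_mul_div, div_le_iff₀ (by linarith)]
        calc t * ‖x - u‖ ^ 2 ≤ 2 * c * ε / (‖x - u‖ ^ 2 + 1) * ‖x - u‖ ^ 2 := by
              exact mul_le_mul_of_nonneg_right ht2 hK
          _ ≤ ε * (2 * c) := by
              rw [div_mul_eq_mul_div, div_le_iff₀ hd]
              nlinarith [mul_pos (mul_pos two_pos hc) hε]
      linarith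
  -- w satisfies the minimization property of the conjugate objective
  have hwmin : ∀ x, (⨆ z, (((⟪z, w⟫ : ℝ)) : EReal) - f z) + ((c / 2 * ‖w - c⁻¹ • y‖ ^ 2 : ℝ) : EReal) ≤
      (⨆ z, (((⟪z, x⟫ : ℝ)) : EReal) - f z) + ((c / 2 * ‖x - c⁻¹ • y‖ ^ 2 : ℝ) : EReal) := by
    intro x
    have hsup_le : (⨆ z, (((⟪z, w⟫ : ℝ)) : EReal) - f z) ≤ ((⟪u, w⟫ - fu : ℝ) : EReal) := by
      apply iSup_le
      intro z
      by_cases hfz_top : f z = ⊤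
      · rw [hfz_top, EReal.sub_top]; exact bot_le
      obtain ⟨fz, hfz⟩ : ∃ r : ℝ, f z = (r : EReal) :=
        ⟨(f z).toReal, (EReal.coe_toReal hfz_top (hne_bot z)).symm⟩
      · rw [hfz, ← EReal.coe_sub, EReal.coe_le_coe_iff]
        have := hsub z
        rw [hfz, EReal.coe_le_coe_iff] at this
        have h1 : ⟪w, z - u⟫ = ⟪w, z⟫ - ⟪w, u⟫ := inner_sub_right _ _ _
        have h2 : ⟪z, w⟫ = ⟪w, z⟫ := real_inner_comm _ _
        have h3 : ⟪u, w⟫ = ⟪w, u⟫ := real_inner_comm _ _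
        rw [h1] at this
        linarith
    have hsup_ge : ((⟪u, x⟫ - fu : ℝ) : EReal) ≤ ⨆ z, (((⟪z, x⟫ : ℝ)) : EReal) - f z := by
      have := le_iSup (fun z => (((⟪z, x⟫ : ℝ)) : EReal) - f z) u
      rw [hfu] at this
      rwa [EReal.coe_sub]
    have hreal : ((⟪u, w⟫ - fu + c / 2 * ‖w - c⁻¹ • y‖ ^ 2 : ℝ) : EReal) ≤
        ((⟪u, x⟫ - fu + c / 2 * ‖x - c⁻¹ • y‖ ^ 2 : ℝ) : EReal) := by
      rw [EReal.coe_le_coe_iff]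
      have hw1 : w - c⁻¹ • y = -(c⁻¹ • u) := by rw [hw]; module
      have hn1 : ‖w - c⁻¹ • y‖ ^ 2 = c⁻¹ ^ 2 * ‖u‖ ^ 2 := by
        rw [hw1, norm_neg, norm_smul, Real.norm_eq_abs, mul_pow, sq_abs]
      have hinner_uw : ⟪u, w⟫ = c⁻¹ * (⟪u, y⟫ - ⟪u, u⟫) := by
        rw [hw, real_inner_smul_right, inner_sub_right]
      have hn2 : ‖x - c⁻¹ • y‖ ^ 2 = ‖x‖ ^ 2 - 2 * (c⁻¹ * ⟪x, y⟫) + c⁻¹ ^ 2 * ‖y‖ ^ 2 := by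
        rw [norm_sub_sq_real, real_inner_smul_right, norm_smul, Real.norm_eq_abs, mul_pow, sq_abs]
      have hsq : (0:ℝ) ≤ ‖c • x + (u - y)‖ ^ 2 := by positivity
      have key : (⟪u, x⟫ - fu + c / 2 * ‖x - c⁻¹ • y‖ ^ 2)
          - (⟪u, w⟫ - fu + c / 2 * ‖w - c⁻¹ • y‖ ^ 2)
          = 1 / (2 * c) * ‖c • x + (u - y)‖ ^ 2 := by
        rw [hn1, hn2, hinner_uw, norm_add_sq_real, real_inner_smul_left, norm_smul,
          Real.norm_eq_abs, mul_pow, sq_abs, inner_sub_right, norm_sub_sq_real,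
          real_inner_comm x u, ← real_inner_self_eq_norm_sq u]
        field_simp
        ring
      nlinarith [mul_nonneg (by positivity : (0:ℝ) ≤ 1 / (2 * c)) hsq, key]
    calc (⨆ z, (((⟪z, w⟫ : ℝ)) : EReal) - f z) + ((c / 2 * ‖w - c⁻¹ • y‖ ^ 2 : ℝ) : EReal)
        ≤ ((⟪u, w⟫ - fu : ℝ) : EReal) + ((c / 2 * ‖w - c⁻¹ • y‖ ^ 2 : ℝ) : EReal) :=
          add_le_add_left hsup_le _
      _ = ((⟪u, w⟫ - fu + c / 2 * ‖w - c⁻¹ • y‖ ^ 2 : ℝ) : EReal) := by rw [EReal.coe_add]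
      _ ≤ ((⟪u, x⟫ - fu + c / 2 * ‖x - c⁻¹ • y‖ ^ 2 : ℝ) : EReal) := hreal
      _ = ((⟪u, x⟫ - fu : ℝ) : EReal) + ((c / 2 * ‖x - c⁻¹ • y‖ ^ 2 : ℝ) : EReal) := by
          rw [EReal.coe_add]
      _ ≤ (⨆ z, (((⟪z, x⟫ : ℝ)) : EReal) - f z) + ((c / 2 * ‖x - c⁻¹ • y‖ ^ 2 : ℝ) : EReal) :=
          add_le_add_left hsup_ge _
  have hwv : w = v := hv_uniq w hwmin
  rw [← hwv, hw, smul_smul, mul_inv_cancel₀ hc.ne', one_smul]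
  abel
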